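/- For a fixed permutation π of {1,...,n}, the map sending a partition λ with at most n parts to the sequence μ defined by μ_i = λ_i + φ_i, where φ_i is the number of descents of π among positions i, i+1, ..., n-1, produces a weakly decreasing sequence μ, the pair (μ, π) is a standard labeled partition, and this map is injective with |μ| = |λ| + maj(π). -/
import Mathlib

open Finset

def maj {n : ℕ} (π : Equiv.Perm (Fin n)) : ℕ :=
  ∑ i ∈ Finset.range n, if h : i + 1 < n then
    (if π ⟨i + 1, h⟩ < π ⟨i, Nat.lt_of_succ_lt h⟩ then i + 1 else 0) else 0

/-- A labeled partition `(μ, π)` is standard if `π i > π (i+1)` implies `μ i > μ (i+1)`. -/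
def IsStandard {n : ℕ} (μ : Fin n → ℕ) (π : Equiv.Perm (Fin n)) : Prop :=
  ∀ i : ℕ, ∀ h : i + 1 < n,
    π ⟨i + 1, h⟩ < π ⟨i, Nat.lt_of_succ_lt h⟩ → μ ⟨i + 1, h⟩ < μ ⟨i, Nat.lt_of_succ_lt h⟩

/-- `phi π i` is the number of descents of `π` among positions `i, i+1, …, n-1`
(0-based index `i`, descents counted in the suffix starting at entry `i`). -/
def phi {n : ℕ} (π : Equiv.Perm (Fin n)) (i : Fin n) : ℕ :=
  ∑ j ∈ Finset.range n, if h : j + 1 < n then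
    (if i.1 ≤ j ∧ π ⟨j + 1, h⟩ < π ⟨j, Nat.lt_of_succ_lt h⟩ then 1 else 0) else 0

lemma phi_anti {n : ℕ} (π : Equiv.Perm (Fin n)) : Antitone (phi π) := by
  intro a b hab
  unfold phi
  apply Finset.sum_le_sum
  intro j _
  split
  · split_ifs with h1 h2
    · exact le_refl _
    · exact absurd ⟨le_trans hab h1.1, h1.2⟩ h2
    · exact Nat.zero_le _
    · exact le_refl _
  · exact le_refl _

lemma phi_succ {n : ℕ} (π : Equiv.Perm (Fin n)) (i : ℕ) (h : i + 1 < n) :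
    phi π ⟨i, Nat.lt_of_succ_lt h⟩ =
      phi π ⟨i + 1, h⟩ +
        (if π ⟨i + 1, h⟩ < π ⟨i, Nat.lt_of_succ_lt h⟩ then 1 else 0) := by
  unfold phi
  have key : (if π ⟨i + 1, h⟩ < π ⟨i, Nat.lt_of_succ_lt h⟩ then 1 else 0) =
      ∑ j ∈ Finset.range n, if j = i then
        (if π ⟨i + 1, h⟩ < π ⟨i, Nat.lt_of_succ_lt h⟩ then 1 else 0) else 0 := by
    rw [Finset.sum_ite_eq' (Finset.range n) i]
    simp [Finset.mem_range.mpr (Nat.lt_of_succ_lt h)]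
  rw [key, ← Finset.sum_add_distrib]
  apply Finset.sum_congr rfl
  intro j hj
  rcases eq_or_ne j i with rfl | hne
  · by_cases hd : π ⟨j + 1, h⟩ < π ⟨j, Nat.lt_of_succ_lt h⟩ <;>
      simp [hd, h, Nat.not_succ_le_self]
  · simp only [if_neg hne, add_zero]
    by_cases hjn : j + 1 < n
    · rw [dif_pos hjn, dif_pos hjn]
      by_cases hd : π ⟨j + 1, hjn⟩ < π ⟨j, Nat.lt_of_succ_lt hjn⟩
      · simp only [hd, and_true, Fin.val_mk]
        split_ifs <;> omega
      · simp [hd]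
    · rw [dif_neg hjn, dif_neg hjn]

lemma sum_phi {n : ℕ} (π : Equiv.Perm (Fin n)) : ∑ i, phi π i = maj π := by
  unfold phi maj
  rw [Finset.sum_comm]
  apply Finset.sum_congr rfl
  intro j hj
  by_cases hjn : j + 1 < n
  · simp only [dif_pos hjn]
    by_cases hd : π ⟨j + 1, hjn⟩ < π ⟨j, Nat.lt_of_succ_lt hjn⟩
    · simp only [hd, and_true, if_pos hd]
      rw [Fin.sum_univ_eq_sum_range (fun i => if i ≤ j then 1 else 0)]
      have hfilt : Finset.filter (fun i => i ≤ j) (Finset.range n)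
          = Finset.range (j + 1) := by
        ext x
        simp only [Finset.mem_filter, Finset.mem_range]
        omega
      rw [← Finset.sum_filter, hfilt, Finset.sum_const, smul_eq_mul, mul_one,
        Finset.card_range]
      simp
    · simp [hd]
  · simp [hjn]

/-- MacMahon's map `λ ↦ λ + φ`: it yields a partition `μ` such that `(μ, π)` is standard,
it is injective on partitions, and `|μ| = |λ| + maj π`. -/
theorem macmahon_map_standard (n : ℕ) (π : Equiv.Perm (Fin n)) :
    (∀ l : Fin n → ℕ, Antitone l →
        Antitone (fun i => l i + phi π i) ∧ IsStandard (fun i => l i + phi π i) π) ∧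
    (∀ l l' : Fin n → ℕ, Antitone l → Antitone l' →
        (fun i => l i + phi π i) = (fun i => l' i + phi π i) → l = l') ∧
    (∀ l : Fin n → ℕ, ∑ i, (l i + phi π i) = (∑ i, l i) + maj π) := by
  refine ⟨?_, ?_, ?_⟩
  · intro l hl
    constructor
    · exact fun a b hab => Nat.add_le_add (hl hab) (phi_anti π hab)
    · intro i h hd
      have hle : (⟨i, Nat.lt_of_succ_lt h⟩ : Fin n) ≤ ⟨i + 1, h⟩ := by
        simp [Fin.mk_le_mk]
      have hli := hl hle
      have hphi := phi_succ π i h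
      rw [if_pos hd] at hphi
      simp only
      omega
  · intro l l' _ _ heq
    funext i
    exact Nat.add_right_cancel (congrFun heq i)
  · intro l
    rw [Finset.sum_add_distrib, sum_phi]
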